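/- Let 0 < α ≤ π/6 and let X ⊆ S^{n-1}. If 4α ≤ θ(x, y) ≤ π − 6α for all distinct x, y ∈ X, then the set W(X) := ⋃_{x ∈ X} Q(x, α) satisfies diam W(X) ≤ 2cos α. -/

import Mathlib

open Real
open scoped RealInnerProductSpace

/-- The unit sphere `S^{n-1}` in `ℝⁿ`. -/
noncomputable def unitSphere (n : ℕ) : Set (EuclideanSpace ℝ (Fin n)) :=
  Metric.sphere (0 : EuclideanSpace ℝ (Fin n)) 1

/-- `Q(x, α) = {x} ∪ {y ∈ S^{n-1} : ‖x - y‖ = 2 cos α}`. -/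
noncomputable def Qset {n : ℕ} (x : EuclideanSpace ℝ (Fin n)) (α : ℝ) :
    Set (EuclideanSpace ℝ (Fin n)) :=
  {x} ∪ {y | y ∈ unitSphere n ∧ ‖x - y‖ = 2 * Real.cos α}

section aux

variable {E : Type*} [NormedAddCommGroup E] [InnerProductSpace ℝ E]

/-- Triangle inequality for angles between unit vectors. -/
lemma angle_triangle_unit {x y z : E} (hx : ‖x‖ = 1) (hy : ‖y‖ = 1) (hz : ‖z‖ = 1) :
    InnerProductGeometry.angle x z ≤ InnerProductGeometry.angle x y +
      InnerProductGeometry.angle y z := by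
  set A := InnerProductGeometry.angle x y with hA
  set B := InnerProductGeometry.angle y z with hB
  by_cases hple : π ≤ A + B
  · exact le_trans (InnerProductGeometry.angle_le_pi x z) hple
  push_neg at hple
  have hA0 := InnerProductGeometry.angle_nonneg x y
  have hB0 := InnerProductGeometry.angle_nonneg y z
  have hC0 := InnerProductGeometry.angle_nonneg x z
  have hCpi := InnerProductGeometry.angle_le_pi x z
  -- key: cos (A + B) ≤ cos (angle x z)
  have hcosA : Real.cos A = ⟪x, y⟫ := by
    have := InnerProductGeometry.cos_angle_mul_norm_mul_norm x y
    rwa [hx, hy, mul_one, mul_one] at this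
  have hcosB : Real.cos B = ⟪y, z⟫ := by
    have := InnerProductGeometry.cos_angle_mul_norm_mul_norm y z
    rwa [hy, hz, mul_one, mul_one] at this
  have hcosC : Real.cos (InnerProductGeometry.angle x z) = ⟪x, z⟫ := by
    have := InnerProductGeometry.cos_angle_mul_norm_mul_norm x z
    rwa [hx, hz, mul_one, mul_one] at this
  have hsinA : Real.sin A = Real.sqrt (1 - ⟪x, y⟫ * ⟪x, y⟫) := by
    have := InnerProductGeometry.sin_angle_mul_norm_mul_norm x y
    rw [hx, hy, mul_one, mul_one, real_inner_self_eq_norm_mul_norm,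
      real_inner_self_eq_norm_mul_norm, hx, hy] at this
    simpa using this
  have hsinB : Real.sin B = Real.sqrt (1 - ⟪y, z⟫ * ⟪y, z⟫) := by
    have := InnerProductGeometry.sin_angle_mul_norm_mul_norm y z
    rw [hy, hz, mul_one, mul_one, real_inner_self_eq_norm_mul_norm,
      real_inner_self_eq_norm_mul_norm, hy, hz] at this
    simpa using this
  -- Cauchy-Schwarz on the orthogonal components
  have hkey : Real.cos (A + B) ≤ Real.cos (InnerProductGeometry.angle x z) := by
    rw [Real.cos_add, hcosA, hcosB, hcosC, hsinA, hsinB]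
    set u : E := x - ⟪x, y⟫ • y with hu
    set v : E := z - ⟪y, z⟫ • y with hv
    have hyy : ⟪y, y⟫ = 1 := by
      rw [real_inner_self_eq_norm_mul_norm, hy]; ring
    have huv : ⟪u, v⟫ = ⟪x, z⟫ - ⟪x, y⟫ * ⟪y, z⟫ := by
      simp [hu, hv, inner_sub_left, inner_sub_right, inner_smul_left, inner_smul_right,
        real_inner_comm x y, real_inner_comm z y, hyy, hy]
    have hun : ‖u‖ = Real.sqrt (1 - ⟪x, y⟫ * ⟪x, y⟫) := by
      have : ‖u‖ ^ 2 = 1 - ⟪x, y⟫ * ⟪x, y⟫ := by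
        rw [hu, norm_sub_sq_real, inner_smul_right, norm_smul, hx, hy, Real.norm_eq_abs,
          mul_pow, sq_abs]
        ring
      rw [← this, Real.sqrt_sq (norm_nonneg u)]
    have hvn : ‖v‖ = Real.sqrt (1 - ⟪y, z⟫ * ⟪y, z⟫) := by
      have : ‖v‖ ^ 2 = 1 - ⟪y, z⟫ * ⟪y, z⟫ := by
        rw [hv, norm_sub_sq_real, inner_smul_right, norm_smul, hz, hy, Real.norm_eq_abs,
          mul_pow, sq_abs, real_inner_comm y z]
        ring
      rw [← this, Real.sqrt_sq (norm_nonneg v)]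
    have hCS : |⟪u, v⟫| ≤ ‖u‖ * ‖v‖ := abs_real_inner_le_norm u v
    have := neg_abs_le ⟪u, v⟫
    rw [huv] at this hCS
    rw [hun, hvn] at hCS
    have habs := (abs_le.mp hCS).1
    linarith
  by_contra hlt
  push_neg at hlt
  have := Real.strictAntiOn_cos ⟨by linarith, by linarith⟩ ⟨hC0, hCpi⟩ hlt
  linarith

end aux

theorem stmt_5 (n : ℕ) (α : ℝ) (hα0 : 0 < α) (hα : α ≤ π / 6)
    (X : Set (EuclideanSpace ℝ (Fin n))) (hX : X ⊆ unitSphere n)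
    (hangle : ∀ x ∈ X, ∀ y ∈ X, x ≠ y →
      4 * α ≤ InnerProductGeometry.angle x y ∧ InnerProductGeometry.angle x y ≤ π - 6 * α) :
    Metric.diam (⋃ x ∈ X, Qset x α) ≤ 2 * Real.cos α := by
  have hπ := Real.pi_pos
  have hcospos : 0 < Real.cos α := Real.cos_pos_of_mem_Ioo ⟨by linarith, by linarith⟩
  -- membership in Qset x gives norm 1 and either equality or angle = π - 2α
  have hQ : ∀ x ∈ X, ∀ a ∈ Qset x α, ‖a‖ = 1 ∧
      (a = x ∨ InnerProductGeometry.angle x a = π - 2 * α) := by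
    intro x hxX a ha
    have hxn : ‖x‖ = 1 := by
      have := hX hxX
      simpa [unitSphere, mem_sphere_iff_norm] using this
    rcases ha with ha | ⟨haS, hd⟩
    · rw [Set.mem_singleton_iff] at ha
      exact ⟨ha ▸ hxn, Or.inl ha⟩
    · have han : ‖a‖ = 1 := by simpa [unitSphere, mem_sphere_iff_norm] using haS
      refine ⟨han, Or.inr ?_⟩
      have hinner : ⟪x, a⟫ = Real.cos (π - 2 * α) := by
        have h2 : ‖x - a‖ ^ 2 = (2 * Real.cos α) ^ 2 := by rw [hd]
        rw [norm_sub_sq_real, hxn, han] at h2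
        have hc2 : Real.cos (2 * α) = 2 * Real.cos α ^ 2 - 1 := Real.cos_two_mul α
        rw [Real.cos_pi_sub]
        nlinarith
      have : InnerProductGeometry.angle x a = Real.arccos (Real.cos (π - 2 * α)) := by
        rw [InnerProductGeometry.angle, hxn, han, hinner]
        norm_num
      rw [this, Real.arccos_cos (by linarith) (by linarith)]
  -- main bound on the angle between any two points of the union
  have key : ∀ a ∈ (⋃ x ∈ X, Qset x α), ∀ b ∈ (⋃ x ∈ X, Qset x α),
      dist a b ≤ 2 * Real.cos α := by
    intro a ha b hb
    simp only [Set.mem_iUnion] at ha hb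
    obtain ⟨x, hxX, hax⟩ := ha
    obtain ⟨y, hyX, hby⟩ := hb
    obtain ⟨han, hacase⟩ := hQ x hxX a hax
    obtain ⟨hbn, hbcase⟩ := hQ y hyX b hby
    have hxn : ‖x‖ = 1 := by
      have := hX hxX; simpa [unitSphere, mem_sphere_iff_norm] using this
    have hyn : ‖y‖ = 1 := by
      have := hX hyX; simpa [unitSphere, mem_sphere_iff_norm] using this
    -- angle a b ≤ π - 2α
    have hangab : InnerProductGeometry.angle a b ≤ π - 2 * α := by
      by_cases hxy : x = y
      · subst hxy
        rcases hacase with rfl | hA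
        · rcases hbcase with rfl | hB
          · rw [InnerProductGeometry.angle_self (by intro h; rw [h] at han; simp at han)]
            linarith
          · rw [hB]
        · rcases hbcase with rfl | hB
          · rw [InnerProductGeometry.angle_comm, hA]
          · -- angle a b ≤ angle a (-x) + angle (-x) b = 2α + 2α
            have t := angle_triangle_unit han (by rw [norm_neg]; exact hxn) hbn
            rw [InnerProductGeometry.angle_neg_right, InnerProductGeometry.angle_neg_left,
              InnerProductGeometry.angle_comm a x, hA, hB] at t
            linarith
      · obtain ⟨hge, hle⟩ := hangle x hxX y hyX hxy
        rcases hacase with rfl | hA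
        · rcases hbcase with rfl | hB
          · linarith
          · -- angle x b ≤ angle x (-y) + angle (-y) b
            have t := angle_triangle_unit hxn (by rw [norm_neg]; exact hyn) hbn
            rw [InnerProductGeometry.angle_neg_right, InnerProductGeometry.angle_neg_left,
              hB] at t
            linarith
        · rcases hbcase with rfl | hB
          · -- angle a y ≤ angle a (-x) + angle (-x) y
            have t := angle_triangle_unit han (by rw [norm_neg]; exact hxn) hbn
            rw [InnerProductGeometry.angle_neg_right, InnerProductGeometry.angle_neg_left,
              InnerProductGeometry.angle_comm a x, hA] at t
            linarith
          · -- angle a b ≤ 2α + angle x y + 2α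
            have t1 := angle_triangle_unit han (by rw [norm_neg]; exact hxn) hbn
            have t2 := angle_triangle_unit (by rw [norm_neg]; exact hxn)
              (by rw [norm_neg]; exact hyn) hbn
            rw [InnerProductGeometry.angle_neg_neg, InnerProductGeometry.angle_neg_left,
              InnerProductGeometry.angle_neg_left, hB] at t2
            rw [InnerProductGeometry.angle_neg_right, InnerProductGeometry.angle_neg_left,
              InnerProductGeometry.angle_comm a x, hA] at t1
            linarith
    -- convert the angle bound to a distance bound
    have hinge : Real.cos (π - 2 * α) ≤ ⟪a, b⟫ := by
      have hc := InnerProductGeometry.cos_angle_mul_norm_mul_norm a b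
      rw [han, hbn, mul_one, mul_one] at hc
      rw [← hc]
      exact Real.cos_le_cos_of_nonneg_of_le_pi (InnerProductGeometry.angle_nonneg a b)
        (by linarith) hangab
    rw [Real.cos_pi_sub, Real.cos_two_mul] at hinge
    have hsq : dist a b ^ 2 ≤ (2 * Real.cos α) ^ 2 := by
      rw [dist_eq_norm, norm_sub_sq_real, han, hbn]
      nlinarith
    nlinarith [dist_nonneg (x := a) (y := b)]
  exact Metric.diam_le_of_forall_dist_le (by positivity) key
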